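/- arXiv:2204.09928 — 2 statements merged into one kernel-verified Lean document; each statement's English description precedes it below -/
import Mathlib

section
/- Let Σ, Λ be symmetric positive definite n×n matrices. Then V = 2·sym(Σ^{1/2}(Σ^{1/2}ΛΣ^{1/2})^{1/2}Σ^{−1/2}) − 2Σ is symmetric and the curve γ(t) = Σ + tV + t²S_Σ(V)ΣS_Σ(V) satisfies γ(0) = Σ and γ(1) = Λ. -/
open Matrix

open Classical in
/-- The symmetric PSD square root of a PSD matrix (junk value `0` otherwise). -/
noncomputable def psdSqrt {n : ℕ} (A : Matrix (Fin n) (Fin n) ℝ) : Matrix (Fin n) (Fin n) ℝ :=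
  if h : A.PosSemidef then
    (h.1.eigenvectorUnitary : Matrix (Fin n) (Fin n) ℝ) *
      diagonal ((↑) ∘ (√·) ∘ h.1.eigenvalues) *
      (star h.1.eigenvectorUnitary : Matrix (Fin n) (Fin n) ℝ)
  else 0

/-- Symmetric part of a square matrix. -/
noncomputable def symPart {n : ℕ} (M : Matrix (Fin n) (Fin n) ℝ) : Matrix (Fin n) (Fin n) ℝ :=
  (1 / 2 : ℝ) • (M + Mᵀ)

lemma psdSqrt_mul_self {n : ℕ} {A : Matrix (Fin n) (Fin n) ℝ} (h : A.PosSemidef) :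
    psdSqrt A * psdSqrt A = A := by
  classical
  rw [psdSqrt, dif_pos h]
  have hU : (star h.1.eigenvectorUnitary : Matrix (Fin n) (Fin n) ℝ) *
      (h.1.eigenvectorUnitary : Matrix (Fin n) (Fin n) ℝ) = 1 :=
    Unitary.coe_star_mul_self _
  have hD : diagonal ((↑) ∘ (√·) ∘ h.1.eigenvalues) *
      diagonal ((↑) ∘ (√·) ∘ h.1.eigenvalues) =
      diagonal (((↑) : ℝ → ℝ) ∘ h.1.eigenvalues) := by
    rw [diagonal_mul_diagonal]
    congr 1
    funext i
    simp [Real.mul_self_sqrt (h.eigenvalues_nonneg i)]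
  conv_rhs => rw [h.1.spectral_theorem]
  rw [Unitary.conjStarAlgAut_apply]
  calc _ = (h.1.eigenvectorUnitary : Matrix (Fin n) (Fin n) ℝ) *
        (diagonal ((↑) ∘ (√·) ∘ h.1.eigenvalues) *
        ((star h.1.eigenvectorUnitary : Matrix (Fin n) (Fin n) ℝ) *
          (h.1.eigenvectorUnitary : Matrix (Fin n) (Fin n) ℝ)) *
        diagonal ((↑) ∘ (√·) ∘ h.1.eigenvalues)) *
        (star h.1.eigenvectorUnitary : Matrix (Fin n) (Fin n) ℝ) := by
          simp only [mul_assoc]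
    _ = _ := by rw [hU, mul_one, hD]; rfl

lemma psdSqrt_transpose {n : ℕ} {A : Matrix (Fin n) (Fin n) ℝ} (h : A.PosSemidef) :
    (psdSqrt A)ᵀ = psdSqrt A := by
  classical
  rw [psdSqrt, dif_pos h]
  have hs : star (h.1.eigenvectorUnitary : Matrix (Fin n) (Fin n) ℝ) =
      (h.1.eigenvectorUnitary : Matrix (Fin n) (Fin n) ℝ)ᵀ := by
    rw [star_eq_conjTranspose, conjTranspose_eq_transpose_of_trivial]
  rw [hs, transpose_mul, transpose_mul, transpose_transpose, diagonal_transpose, mul_assoc]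

lemma psd_eq_zero_of_trace_eq_zero {n : ℕ} {P : Matrix (Fin n) (Fin n) ℝ}
    (hP : P.PosSemidef) (h : P.trace = 0) : P = 0 := by
  obtain ⟨C, rfl⟩ : ∃ C : Matrix (Fin n) (Fin n) ℝ, P = Cᴴ * C :=
    ⟨psdSqrt P, by rw [conjTranspose_eq_transpose_of_trivial, psdSqrt_transpose hP,
      psdSqrt_mul_self hP]⟩
  have hC : C = 0 := by
    have htr : (Cᴴ * C).trace = ∑ i, ∑ j, (C j i) ^ 2 := by
      simp [Matrix.trace, Matrix.diag, Matrix.mul_apply, Matrix.conjTranspose_apply, sq]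
    rw [htr] at h
    ext i j
    have h1 : ∀ i ∈ Finset.univ, (0:ℝ) ≤ ∑ j, (C j i) ^ 2 :=
      fun i _ => Finset.sum_nonneg fun j _ => sq_nonneg _
    have h2 := (Finset.sum_eq_zero_iff_of_nonneg h1).mp h j (Finset.mem_univ _)
    have h3 := (Finset.sum_eq_zero_iff_of_nonneg
      (fun k _ => sq_nonneg (C k j))).mp h2 i (Finset.mem_univ _)
    simpa using pow_eq_zero_iff (n := 2) (by norm_num) |>.mp h3
  simp [hC]

lemma sylvester_zero {n : ℕ} {A D : Matrix (Fin n) (Fin n) ℝ}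
    (hA : A.PosDef) (hD : Dᵀ = D) (h : A * D + D * A = 0) : D = 0 := by
  have hDA : D * A = -(A * D) := by linear_combination (norm := noncomm_ring) h
  -- D * A * D is positive semidefinite
  have hPSD : (D * A * D).PosSemidef := by
    have := hA.posSemidef.mul_mul_conjTranspose_same D
    rwa [show Dᴴ = D by rw [Matrix.conjTranspose_eq_transpose_of_trivial, hD]] at this
  -- trace of D * A * D is zero
  have htr : (D * A * D).trace = 0 := by
    have h1 : D * A * D = -(A * (D * D)) := by rw [hDA]; noncomm_ring
    have h2 : (D * A * D).trace = (A * (D * D)).trace := by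
      rw [Matrix.trace_mul_comm (D * A) D, ← mul_assoc, Matrix.trace_mul_comm (D * D) A]
    have h3 : (D * A * D).trace = -((A * (D * D)).trace) := by rw [h1, Matrix.trace_neg]
    linarith [h2, h3]
  have hDAD : D * A * D = 0 := psd_eq_zero_of_trace_eq_zero hPSD htr
  -- conclude D = 0
  have hcol : ∀ x : Fin n → ℝ, D *ᵥ x = 0 := by
    intro x
    by_contra hx
    have hpos := hA.dotProduct_mulVec_pos hx
    have hDx : D *ᵥ x = x ᵥ* D := by
      have := Matrix.mulVec_transpose D x
      rwa [hD] at this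
    have e : star (D *ᵥ x) ⬝ᵥ A *ᵥ (D *ᵥ x) = 0 := by
      rw [star_trivial, Matrix.mulVec_mulVec, hDx, Matrix.dotProduct_mulVec,
        Matrix.vecMul_vecMul, show D * (A * D) = 0 by rw [← mul_assoc, hDAD],
        Matrix.vecMul_zero, zero_dotProduct]
    rw [e] at hpos
    exact lt_irrefl 0 hpos
  ext i j
  have := congrFun (hcol (Pi.single j 1)) i
  simpa [Matrix.mulVec, dotProduct_single] using this

theorem buresWasserstein_log_full_rank (n : ℕ) (A B : Matrix (Fin n) (Fin n) ℝ)
    (hA : A.PosDef) (hB : B.PosDef)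
    (V : Matrix (Fin n) (Fin n) ℝ)
    (hV : V = (2 : ℝ) • symPart
        (psdSqrt A * psdSqrt (psdSqrt A * B * psdSqrt A) * (psdSqrt A)⁻¹)
      - (2 : ℝ) • A) :
    Vᵀ = V ∧
    ∀ S : Matrix (Fin n) (Fin n) ℝ, Sᵀ = S → A * S + S * A = V →
      (A + (0 : ℝ) • V + ((0 : ℝ) ^ 2) • (S * A * S) = A ∧
       A + (1 : ℝ) • V + ((1 : ℝ) ^ 2) • (S * A * S) = B) := by
  classical
  set T : Matrix (Fin n) (Fin n) ℝ := psdSqrt A with hTdef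
  have hTT : T * T = A := psdSqrt_mul_self hA.posSemidef
  have hTsym : Tᵀ = T := psdSqrt_transpose hA.posSemidef
  have hAt : Aᵀ = A := by
    rw [← Matrix.conjTranspose_eq_transpose_of_trivial]; exact hA.isHermitian.eq
  have hTdet : IsUnit T.det := by
    have hd : T.det * T.det = A.det := by rw [← Matrix.det_mul, hTT]
    have hAdet : A.det ≠ 0 := ne_of_gt hA.det_pos
    refine isUnit_iff_ne_zero.mpr fun h0 => hAdet ?_
    rw [← hd, h0, zero_mul]
  have hTBT : (T * B * T).PosSemidef := by
    have := hB.posSemidef.mul_mul_conjTranspose_same T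
    rwa [show Tᴴ = T by rw [Matrix.conjTranspose_eq_transpose_of_trivial, hTsym]] at this
  set M : Matrix (Fin n) (Fin n) ℝ := psdSqrt (T * B * T) with hMdef
  have hMM : M * M = T * B * T := psdSqrt_mul_self hTBT
  have hMsym : Mᵀ = M := psdSqrt_transpose hTBT
  have hTinv : (T⁻¹)ᵀ = T⁻¹ := by rw [Matrix.transpose_nonsing_inv, hTsym]
  have ht1 : (T * M * T⁻¹)ᵀ = T⁻¹ * M * T := by
    rw [Matrix.transpose_mul, Matrix.transpose_mul, hTinv, hMsym, hTsym, ← mul_assoc]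
  have ht2 : (T⁻¹ * M * T)ᵀ = T * M * T⁻¹ := by
    rw [Matrix.transpose_mul, Matrix.transpose_mul, hTinv, hMsym, hTsym, ← mul_assoc]
  -- simplify V
  have hVeq : V = T * M * T⁻¹ + T⁻¹ * M * T - (2 : ℝ) • A := by
    rw [hV, symPart, ht1, smul_smul]
    norm_num
  have hVsym : Vᵀ = V := by
    rw [hVeq, Matrix.transpose_sub, Matrix.transpose_add, ht1, ht2,
      Matrix.transpose_smul, hAt]
    abel
  refine ⟨hVsym, ?_⟩
  -- the canonical solution
  set S₀ : Matrix (Fin n) (Fin n) ℝ := T⁻¹ * M * T⁻¹ - 1 with hS0def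
  have hS0sym : S₀ᵀ = S₀ := by
    rw [hS0def, Matrix.transpose_sub, Matrix.transpose_mul, Matrix.transpose_mul, hTinv, hMsym,
      Matrix.transpose_one, mul_assoc]
  have e0 : T⁻¹ * M * T⁻¹ * A = T⁻¹ * M * T := by
    rw [← hTT, mul_assoc (T⁻¹ * M) T⁻¹ _, ← mul_assoc T⁻¹ T T,
      Matrix.nonsing_inv_mul _ hTdet, one_mul]
  have e1 : A * (T⁻¹ * M * T⁻¹) = T * M * T⁻¹ := by
    rw [← hTT, show T⁻¹ * M * T⁻¹ = T⁻¹ * (M * T⁻¹) by rw [mul_assoc],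
      mul_assoc T T _, Matrix.mul_nonsing_inv_cancel_left _ _ hTdet, ← mul_assoc]
  have e2 : T⁻¹ * M * T * (T⁻¹ * M * T⁻¹) = B := by
    calc T⁻¹ * M * T * (T⁻¹ * M * T⁻¹)
        = T⁻¹ * M * (T * (T⁻¹ * (M * T⁻¹))) := by simp only [mul_assoc]
      _ = T⁻¹ * M * (M * T⁻¹) := by rw [Matrix.mul_nonsing_inv_cancel_left _ _ hTdet]
      _ = T⁻¹ * (M * M) * T⁻¹ := by simp only [mul_assoc]
      _ = T⁻¹ * (T * (B * T)) * T⁻¹ := by rw [hMM, mul_assoc T B T]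
      _ = B := by
          rw [Matrix.nonsing_inv_mul_cancel_left _ _ hTdet,
            Matrix.mul_nonsing_inv_cancel_right _ _ hTdet]
  have e3 : T⁻¹ * M * T⁻¹ * A * (T⁻¹ * M * T⁻¹) = B := by rw [e0, e2]
  have hS0syl : A * S₀ + S₀ * A = V := by
    rw [hVeq, hS0def, Matrix.mul_sub, Matrix.sub_mul, mul_one, one_mul, e1, e0, two_smul]
    abel
  have hS0geo : A + V + S₀ * A * S₀ = B := by
    have expand : S₀ * A * S₀ =
        T⁻¹ * M * T⁻¹ * A * (T⁻¹ * M * T⁻¹) - T⁻¹ * M * T⁻¹ * A - A * (T⁻¹ * M * T⁻¹) + A := by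
      rw [hS0def]; noncomm_ring
    rw [hVeq, expand, e3, e0, e1, two_smul]
    abel
  intro S hSsym hSsyl
  have hSeq : S = S₀ := by
    have hD : A * (S - S₀) + (S - S₀) * A = 0 := by
      have : A * S + S * A - (A * S₀ + S₀ * A) = 0 := by rw [hSsyl, hS0syl, sub_self]
      linear_combination (norm := noncomm_ring) this
    have hDsym : (S - S₀)ᵀ = S - S₀ := by rw [Matrix.transpose_sub, hSsym, hS0sym]
    have := sylvester_zero hA hDsym hD
    linear_combination (norm := noncomm_ring) this
  subst hSeq
  exact ⟨by simp, by simpa using hS0geo⟩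
end

section
/- For Σ, Λ symmetric positive definite, the Bures-Wasserstein geodesic γ(t) = (1−t)²Σ + t²Λ + 2t(1−t)·sym(Σ^{1/2}(Σ^{1/2}ΛΣ^{1/2})^{1/2}Σ^{−1/2}) is symmetric positive definite for every t ∈ [0,1]. -/
open Matrix

/-- The spectral square root (replacement for the removed `Matrix.PosSemidef.sqrt`). -/
noncomputable def Matrix.PosSemidef.sqrt {n : ℕ} {A : Matrix (Fin n) (Fin n) ℝ}
    (h : A.PosSemidef) : Matrix (Fin n) (Fin n) ℝ :=
  (h.1.eigenvectorUnitary : Matrix (Fin n) (Fin n) ℝ) *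
    diagonal ((↑) ∘ (√·) ∘ h.1.eigenvalues) *
    (star h.1.eigenvectorUnitary : Matrix (Fin n) (Fin n) ℝ)

lemma Matrix.PosSemidef.sqrt_eq_cfc {n : ℕ} {A : Matrix (Fin n) (Fin n) ℝ}
    (h : A.PosSemidef) : h.sqrt = cfc Real.sqrt A := by
  rw [h.1.cfc_eq, IsHermitian.cfc, Unitary.conjStarAlgAut_apply]
  rfl

lemma Matrix.PosSemidef.sqrt_mul_self {n : ℕ} {A : Matrix (Fin n) (Fin n) ℝ}
    (h : A.PosSemidef) : h.sqrt * h.sqrt = A := by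
  have hsa : IsSelfAdjoint A := h.1
  rw [h.sqrt_eq_cfc, ← cfc_mul Real.sqrt Real.sqrt A]
  conv_rhs => rw [← cfc_id ℝ A hsa]
  refine cfc_congr fun x hx => ?_
  obtain ⟨i, rfl⟩ := h.1.spectrum_real_eq_range_eigenvalues ▸ hx
  exact Real.mul_self_sqrt (h.eigenvalues_nonneg i)

lemma Matrix.PosSemidef.posSemidef_sqrt {n : ℕ} {A : Matrix (Fin n) (Fin n) ℝ}
    (h : A.PosSemidef) : h.sqrt.PosSemidef := by
  have hd : (diagonal ((↑) ∘ (√·) ∘ h.1.eigenvalues) : Matrix (Fin n) (Fin n) ℝ).PosSemidef :=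
    posSemidef_diagonal_iff.mpr fun i => Real.sqrt_nonneg _
  simpa [Matrix.PosSemidef.sqrt, star_eq_conjTranspose] using
    hd.mul_mul_conjTranspose_same (h.1.eigenvectorUnitary : Matrix (Fin n) (Fin n) ℝ)

section helpers
variable {n : ℕ}

lemma myPosDef_conj {A C : Matrix (Fin n) (Fin n) ℝ} (hA : A.PosDef) (hC : IsUnit C) :
    (C * A * Cᴴ).PosDef := by
  refine PosDef.of_dotProduct_mulVec_pos (hA.posSemidef.mul_mul_conjTranspose_same C).1
    fun x hx => ?_
  have hCH : IsUnit (Cᴴ) := by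
    rw [Matrix.isUnit_iff_isUnit_det, Matrix.det_conjTranspose]
    simpa using (Matrix.isUnit_iff_isUnit_det C).mp hC
  have hx' : Cᴴ *ᵥ x ≠ 0 := by
    intro h
    exact hx (Matrix.mulVec_injective_iff_isUnit.mpr hCH (by simp only [h, Matrix.mulVec_zero]))
  simpa only [star_mulVec, dotProduct_mulVec, vecMul_vecMul, Matrix.mul_assoc,
    conjTranspose_conjTranspose] using hA.dotProduct_mulVec_pos hx'

lemma myHermitian_smul {A : Matrix (Fin n) (Fin n) ℝ} (hA : A.IsHermitian) (c : ℝ) :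
    (c • A).IsHermitian := by
  rw [Matrix.IsHermitian, conjTranspose_smul, star_trivial, hA.eq]

lemma myPosSemidef_smul {A : Matrix (Fin n) (Fin n) ℝ} (hA : A.PosSemidef) {c : ℝ} (hc : 0 ≤ c) :
    (c • A).PosSemidef := by
  refine PosSemidef.of_dotProduct_mulVec_nonneg (myHermitian_smul hA.1 c) fun x => ?_
  rw [smul_mulVec, dotProduct_smul, smul_eq_mul]
  exact mul_nonneg hc (hA.dotProduct_mulVec_nonneg x)

lemma myPosDef_smul {A : Matrix (Fin n) (Fin n) ℝ} (hA : A.PosDef) {c : ℝ} (hc : 0 < c) :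
    (c • A).PosDef := by
  refine PosDef.of_dotProduct_mulVec_pos (myHermitian_smul hA.1 c) fun x hx => ?_
  rw [smul_mulVec, dotProduct_smul, smul_eq_mul]
  exact mul_pos hc (hA.dotProduct_mulVec_pos hx)

lemma myPosDef_of_posSemidef_isUnit {A : Matrix (Fin n) (Fin n) ℝ}
    (hA : A.PosSemidef) (hU : IsUnit A) : A.PosDef := by
  refine PosDef.of_dotProduct_mulVec_pos hA.1 fun x hx => ?_
  rcases lt_or_eq_of_le (hA.dotProduct_mulVec_nonneg x) with h | h
  · exact h
  · exfalso
    have h0 : A *ᵥ x = 0 := (hA.dotProduct_mulVec_zero_iff x).mp h.symm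
    exact hx (Matrix.mulVec_injective_iff_isUnit.mpr hU
      (by simp only [h0, Matrix.mulVec_zero]))

lemma myPosDef_sqrt {A : Matrix (Fin n) (Fin n) ℝ} (hA : A.PosDef) :
    (hA.posSemidef.sqrt).PosDef := by
  refine myPosDef_of_posSemidef_isUnit hA.posSemidef.posSemidef_sqrt ?_
  rw [Matrix.isUnit_iff_isUnit_det, isUnit_iff_ne_zero]
  intro h
  have := hA.det_pos
  rw [← hA.posSemidef.sqrt_mul_self, Matrix.det_mul, h, mul_zero] at this
  exact lt_irrefl _ this

lemma psdSqrt_eq {A : Matrix (Fin n) (Fin n) ℝ} (hA : A.PosSemidef) :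
    psdSqrt A = hA.sqrt := dif_pos hA

end helpers

theorem buresWasserstein_geodesic_posdef (n : ℕ) (A B : Matrix (Fin n) (Fin n) ℝ)
    (hA : A.PosDef) (hB : B.PosDef) (t : ℝ) (ht : t ∈ Set.Icc (0 : ℝ) 1) :
    ((1 - t) ^ 2 • A + t ^ 2 • B + (2 * t * (1 - t)) • symPart
        (psdSqrt A * psdSqrt (psdSqrt A * B * psdSqrt A) * (psdSqrt A)⁻¹)).PosDef := by
  obtain ⟨ht0, ht1⟩ := ht
  rw [psdSqrt_eq hA.posSemidef]
  set S : Matrix (Fin n) (Fin n) ℝ := hA.posSemidef.sqrt with hSdef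
  have hSpd : S.PosDef := myPosDef_sqrt hA
  have hSS : S * S = A := hA.posSemidef.sqrt_mul_self
  have hSH : Sᴴ = S := hSpd.isHermitian
  have hST : Sᵀ = S := by rw [← Matrix.conjTranspose_eq_transpose_of_trivial, hSH]
  have hSunit : IsUnit S := hSpd.isUnit
  have hSdet : IsUnit S.det := (Matrix.isUnit_iff_isUnit_det S).mp hSunit
  have hSi : S⁻¹ * S = 1 := Matrix.nonsing_inv_mul S hSdet
  have hSi' : S * S⁻¹ = 1 := Matrix.mul_nonsing_inv S hSdet
  have hSiH : (S⁻¹)ᴴ = S⁻¹ := by rw [Matrix.conjTranspose_nonsing_inv, hSH]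
  have hSiT : (S⁻¹)ᵀ = S⁻¹ := by rw [← Matrix.conjTranspose_eq_transpose_of_trivial, hSiH]
  have hSiunit : IsUnit S⁻¹ := Matrix.isUnit_nonsing_inv_iff.mpr hSunit
  have hSBS : (S * B * S).PosDef := by
    have := myPosDef_conj hB hSunit
    rwa [hSH] at this
  rw [psdSqrt_eq hSBS.posSemidef]
  set M : Matrix (Fin n) (Fin n) ℝ := hSBS.posSemidef.sqrt with hMdef
  have hMpd : M.PosDef := myPosDef_sqrt hSBS
  have hMM : M * M = S * B * S := hSBS.posSemidef.sqrt_mul_self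
  have hMH : Mᴴ = M := hMpd.isHermitian
  have hMT : Mᵀ = M := by rw [← Matrix.conjTranspose_eq_transpose_of_trivial, hMH]
  -- the transport map
  set T : Matrix (Fin n) (Fin n) ℝ := S⁻¹ * M * S⁻¹ with hTdef
  have hTpd : T.PosDef := by
    have := myPosDef_conj hMpd hSiunit
    rwa [hSiH] at this
  have hTH : Tᴴ = T := hTpd.isHermitian
  -- algebraic identities
  have hTA : T * A = S⁻¹ * M * S := by
    rw [hTdef, ← hSS]
    rw [Matrix.mul_assoc (S⁻¹ * M) S⁻¹, ← Matrix.mul_assoc S⁻¹ S S, hSi, Matrix.one_mul]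
  have hAT : A * T = S * M * S⁻¹ := by
    rw [hTdef, ← hSS]
    calc S * S * (S⁻¹ * M * S⁻¹) = S * (S * S⁻¹) * M * S⁻¹ := by
          simp only [Matrix.mul_assoc]
    _ = S * M * S⁻¹ := by rw [hSi', Matrix.mul_one]
  have hTAT : T * A * T = B := by
    rw [hTA, hTdef]
    calc S⁻¹ * M * S * (S⁻¹ * M * S⁻¹)
        = S⁻¹ * M * (S * S⁻¹) * M * S⁻¹ := by simp only [Matrix.mul_assoc]
    _ = S⁻¹ * (M * M) * S⁻¹ := by rw [hSi']; simp only [Matrix.mul_one, Matrix.mul_assoc]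
    _ = (S⁻¹ * S) * B * (S * S⁻¹) := by rw [hMM]; simp only [Matrix.mul_assoc]
    _ = B := by rw [hSi, hSi', Matrix.one_mul, Matrix.mul_one]
  -- symPart identity
  have hSymT : (S * M * S⁻¹)ᵀ = S⁻¹ * M * S := by
    rw [Matrix.transpose_mul, Matrix.transpose_mul, hSiT, hMT, hST, Matrix.mul_assoc]
  have hsym : symPart (S * M * S⁻¹) = (1 / 2 : ℝ) • (A * T + T * A) := by
    rw [symPart, hSymT, hAT, hTA]
  -- R = (1-t) • 1 + t • T
  set R : Matrix (Fin n) (Fin n) ℝ := (1 - t) • 1 + t • T with hRdef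
  have hRpd : R.PosDef := by
    rcases lt_or_eq_of_le ht1 with h | h
    · exact (myPosDef_smul Matrix.PosDef.one (by linarith)).add_posSemidef
        (myPosSemidef_smul hTpd.posSemidef ht0)
    · rw [hRdef, h]
      simpa using hTpd
  have hRH : Rᴴ = R := hRpd.isHermitian
  have hkey : (1 - t) ^ 2 • A + t ^ 2 • B + (2 * t * (1 - t)) • symPart (S * M * S⁻¹)
      = R * A * Rᴴ := by
    rw [hRH, hsym, hRdef, ← hTAT]
    simp only [Matrix.add_mul, Matrix.mul_add, Matrix.smul_mul, Matrix.mul_smul,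
      Matrix.one_mul, Matrix.mul_one, smul_add, smul_smul, Matrix.mul_assoc]
    module
  rw [hkey]
  exact myPosDef_conj hA hRpd.isUnit
end
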